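/- Let P ⊆ ℝ^n be a pointed (line-free) convex polyhedron with recession cone C, and let ∂_f P denote the union of the bounded faces of P. Then P = ∂_f P + C, i.e., every point of P can be written as a point of some bounded face of P plus a vector in C. -/
import Mathlib


open Set Pointwise Filter Topology

/-- An unbounded nonempty polyhedron has a nonzero recession direction. -/
lemma rec_dir {n : ℕ} {ι : Type*} [Fintype ι]
    (g : ι → ((Fin n → ℝ) →ₗ[ℝ] ℝ)) (d : ι → ℝ) (x0 : Fin n → ℝ)
    (hx0 : ∀ i, g i x0 ≤ d i)
    (hub : ¬ Bornology.IsBounded {z : Fin n → ℝ | ∀ i, g i z ≤ d i}) :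
    ∃ c : Fin n → ℝ, c ≠ 0 ∧ ∀ i, g i c ≤ 0 := by
  have h : ∀ m : ℕ, ∃ z : Fin n → ℝ, (∀ i, g i z ≤ d i) ∧ (m : ℝ) + 1 + ‖x0‖ < ‖z‖ := by
    intro m
    by_contra hcon
    push_neg at hcon
    exact hub (isBounded_iff_forall_norm_le.2 ⟨(m : ℝ) + 1 + ‖x0‖, fun z hz => hcon z hz⟩)
  choose z hz hnorm using h
  set w : ℕ → Fin n → ℝ := fun m => z m - x0 with hw
  have hrm : ∀ m : ℕ, (m : ℝ) + 1 ≤ ‖w m‖ := by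
    intro m
    have h1 := norm_sub_norm_le (z m) x0
    have h2 := hnorm m
    simpa [w] using le_trans (by linarith) h1
  have hrpos : ∀ m, (0 : ℝ) < ‖w m‖ := fun m =>
    lt_of_lt_of_le (by positivity) (hrm m)
  set u : ℕ → Fin n → ℝ := fun m => ‖w m‖⁻¹ • w m with hu
  have husphere : ∀ m, u m ∈ Metric.sphere (0 : Fin n → ℝ) 1 := by
    intro m
    simp only [Metric.mem_sphere, dist_zero_right, u, norm_smul, norm_inv, norm_norm]
    exact inv_mul_cancel₀ (ne_of_gt (hrpos m))
  obtain ⟨c, hc, φ, hφ, hconv⟩ :=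
    (isCompact_sphere (0 : Fin n → ℝ) 1).tendsto_subseq husphere
  refine ⟨c, ?_, ?_⟩
  · have hcn : ‖c‖ = 1 := by simpa using hc
    intro h0
    rw [h0] at hcn
    simp at hcn
  · intro i
    have hcont : Tendsto (fun m => g i (u (φ m))) atTop (𝓝 (g i c)) :=
      ((g i).continuous_of_finiteDimensional.continuousAt.tendsto).comp hconv
  -- bound : g i (u m) ≤ (d i - g i x0) / (m+1)
    have hbound : ∀ m : ℕ, g i (u (φ m)) ≤ (d i - g i x0) / ((m : ℝ) + 1) := by
      intro m
      have hA : (0 : ℝ) ≤ d i - g i x0 := by linarith [hx0 i]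
      have h1 : g i (u (φ m)) = ‖w (φ m)‖⁻¹ * (g i (z (φ m)) - g i x0) := by
        simp [u, w, map_smul, map_sub, smul_eq_mul]
      have h2 : g i (z (φ m)) - g i x0 ≤ d i - g i x0 := by linarith [hz (φ m) i]
      have h3 : ‖w (φ m)‖⁻¹ * (g i (z (φ m)) - g i x0) ≤
          ‖w (φ m)‖⁻¹ * (d i - g i x0) :=
        mul_le_mul_of_nonneg_left h2 (inv_nonneg.2 (hrpos (φ m)).le)
      have h4 : ‖w (φ m)‖⁻¹ ≤ ((m : ℝ) + 1)⁻¹ := by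
        apply inv_anti₀ (by positivity)
        have hmφ : (m : ℝ) ≤ (φ m : ℝ) := Nat.cast_le.2 hφ.le_apply
        calc (m : ℝ) + 1 ≤ (φ m : ℝ) + 1 := by linarith
          _ ≤ ‖w (φ m)‖ := hrm (φ m)
      have h5 : ‖w (φ m)‖⁻¹ * (d i - g i x0) ≤ ((m : ℝ) + 1)⁻¹ * (d i - g i x0) :=
        mul_le_mul_of_nonneg_right h4 hA
      rw [h1, div_eq_inv_mul]
      exact le_trans h3 h5
    have hzero : Tendsto (fun m : ℕ => (d i - g i x0) / ((m : ℝ) + 1)) atTop (𝓝 0) := by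
      have h' := (tendsto_const_div_atTop_nhds_zero_nat (d i - g i x0)).comp
        (tendsto_add_atTop_nat 1)
      refine h'.congr fun m => ?_
      simp only [Function.comp_apply]
      push_cast
      ring
    exact le_of_tendsto_of_tendsto' hcont hzero hbound

set_option maxHeartbeats 1600000 in
/-- A pointed (line-free) convex polyhedron `P` with recession cone `C` satisfies
`P = ∂_f P + C`, where `∂_f P` is the union of the bounded (exposed) faces of `P`. -/
theorem stmt_2 (n k : ℕ) (f : Fin k → ((Fin n → ℝ) →ₗ[ℝ] ℝ)) (b : Fin k → ℝ)
    (P : Set (Fin n → ℝ)) (hP : P = {x | ∀ i, f i x ≤ b i})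
    (hpointed : ¬ ∃ (x w : Fin n → ℝ), w ≠ 0 ∧ ∀ t : ℝ, x + t • w ∈ P)
    (C : Set (Fin n → ℝ)) (hC : C = {v | ∀ x ∈ P, ∀ t : ℝ, 0 ≤ t → x + t • v ∈ P}) :
    P = (⋃₀ {F | IsExposed ℝ P F ∧ Bornology.IsBounded F}) + C := by
  classical
  have hCsub : ∀ c : Fin n → ℝ, (∀ i, f i c ≤ 0) → c ∈ C := by
    intro c hc
    rw [hC]
    intro x hx t ht
    rw [hP] at hx ⊢
    intro i
    have heq : f i (x + t • c) = f i x + t * f i c := by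
      simp [map_add, map_smul, smul_eq_mul]
    rw [heq]
    nlinarith [hc i, hx i]
  set U := ⋃₀ {F | IsExposed ℝ P F ∧ Bornology.IsBounded F} with hU
  have key : ∀ m : ℕ, ∀ x ∈ P, (Finset.univ.filter (fun i => f i x ≠ b i)).card = m →
      ∃ y c, y ∈ U ∧ (∀ i, f i c ≤ 0) ∧ x = y + c := by
    intro m
    induction m using Nat.strong_induction_on with
    | _ m ih =>
    intro x hx hcard
    have hxP : ∀ i, f i x ≤ b i := by rw [hP] at hx; exact hx
    set I : Finset (Fin k) := Finset.univ.filter (fun i => f i x = b i) with hIdef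
    set F : Set (Fin n → ℝ) := {z | z ∈ P ∧ ∀ i ∈ I, f i z = b i} with hFdef
    have hxF : x ∈ F :=
      ⟨hx, fun i hi => (Finset.mem_filter.1 hi).2⟩
    have hexp : IsExposed ℝ P F := by
      intro _
      refine ⟨(∑ i ∈ I, f i).toContinuousLinearMap, ?_⟩
      have lval : ∀ zz : Fin n → ℝ,
          (∑ i ∈ I, f i).toContinuousLinearMap zz = ∑ i ∈ I, f i zz := by
        intro zz
        simp [LinearMap.coe_toContinuousLinearMap']
      ext zq
      constructor
      · rintro ⟨hzP, hzI⟩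
        refine ⟨hzP, fun y hy => ?_⟩
        rw [lval, lval]
        have hy' : ∀ i, f i y ≤ b i := by rw [hP] at hy; exact hy
        calc ∑ i ∈ I, f i y ≤ ∑ i ∈ I, b i :=
              Finset.sum_le_sum fun i _ => hy' i
          _ = ∑ i ∈ I, f i zq := by
              exact (Finset.sum_congr rfl fun i hi => (hzI i hi).symm)
      · rintro ⟨hzP, hzmax⟩
        refine ⟨hzP, ?_⟩
        have hz' : ∀ i, f i zq ≤ b i := by rw [hP] at hzP; exact hzP
        have hle : ∑ i ∈ I, f i zq ≤ ∑ i ∈ I, b i :=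
          Finset.sum_le_sum fun i _ => hz' i
        have hge : ∑ i ∈ I, b i ≤ ∑ i ∈ I, f i zq := by
          have := hzmax x hx
          rw [lval, lval] at this
          calc ∑ i ∈ I, b i = ∑ i ∈ I, f i x :=
                (Finset.sum_congr rfl fun i hi =>
                  ((Finset.mem_filter.1 hi).2).symm)
            _ ≤ ∑ i ∈ I, f i zq := this
        have hsum : ∑ i ∈ I, f i zq = ∑ i ∈ I, b i := le_antisymm hle hge
        exact fun i hi =>
          (Finset.sum_eq_sum_iff_of_le fun i _ => hz' i).1 hsum i hi
    by_cases hbd : Bornology.IsBounded F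
    · exact ⟨x, 0, ⟨F, ⟨hexp, hbd⟩, hxF⟩, fun i => by simp, by simp⟩
    · -- F unbounded : extract recession direction
      set g : Fin k ⊕ Fin k → ((Fin n → ℝ) →ₗ[ℝ] ℝ) :=
        Sum.elim f (fun i => if i ∈ I then -f i else 0) with hg
      set d : Fin k ⊕ Fin k → ℝ :=
        Sum.elim b (fun i => if i ∈ I then -b i else 0) with hd
      have hFQ : {z : Fin n → ℝ | ∀ j, g j z ≤ d j} = F := by
        ext zz
        constructor
        · intro hzz
          refine ⟨by rw [hP]; exact fun i => hzz (Sum.inl i), fun i hi => ?_⟩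
          have h1 := hzz (Sum.inl i)
          have h2 := hzz (Sum.inr i)
          simp only [g, d, Sum.elim_inr, if_pos hi, LinearMap.neg_apply] at h2
          simp only [g, d, Sum.elim_inl] at h1
          linarith
        · rintro ⟨hzP, hzI⟩ j
          have hzP' : ∀ i, f i zz ≤ b i := by rw [hP] at hzP; exact hzP
          rcases j with i | i
          · simpa [g, d] using hzP' i
          · by_cases hi : i ∈ I
            · simp [g, d, hi, hzI i hi]
            · simp [g, d, hi]
      have hx0 : ∀ j, g j x ≤ d j := by
        intro j
        rcases j with i | i
        · simpa [g, d] using hxP i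
        · by_cases hi : i ∈ I
          · simp [g, d, hi, (Finset.mem_filter.1 hi).2]
          · simp [g, d, hi]
      obtain ⟨c, hc0, hcle⟩ := rec_dir g d x hx0 (by rw [hFQ]; exact hbd)
      have hfcle : ∀ i, f i c ≤ 0 := fun i => by simpa [g] using hcle (Sum.inl i)
      have hIzero : ∀ i ∈ I, f i c = 0 := by
        intro i hi
        have := hcle (Sum.inr i)
        simp only [g, Sum.elim_inr, if_pos hi, LinearMap.neg_apply, d] at this
        linarith [hfcle i]
      -- pointedness gives some constraint strictly decreasing along c
      have hray : ¬ ∀ t : ℝ, x + t • c ∈ P := fun h => hpointed ⟨x, c, hc0, h⟩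
      push_neg at hray
      obtain ⟨t, ht⟩ := hray
      rw [hP] at ht
      simp only [Set.mem_setOf_eq, not_forall, not_le] at ht
      obtain ⟨i0, hi0⟩ := ht
      have hival : f i0 (x + t • c) = f i0 x + t * f i0 c := by
        simp [map_add, map_smul, smul_eq_mul]
      rw [hival] at hi0
      have hi0neg : f i0 c < 0 := by
        rcases lt_or_eq_of_le (hfcle i0) with h | h
        · exact h
        · exfalso
          rw [h, mul_zero, add_zero] at hi0
          exact absurd hi0 (not_lt.2 (hxP i0))
      set J : Finset (Fin k) := Finset.univ.filter (fun i => f i c < 0) with hJdef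
      have hJne : J.Nonempty := ⟨i0, Finset.mem_filter.2 ⟨Finset.mem_univ _, hi0neg⟩⟩
      set s : Fin k → ℝ := fun i => (b i - f i x) / (-f i c) with hsdef
      set t0 : ℝ := J.inf' hJne s with ht0def
      have hsnn : ∀ i ∈ J, 0 ≤ s i := by
        intro i hi
        have hineg : f i c < 0 := (Finset.mem_filter.1 hi).2
        exact div_nonneg (by linarith [hxP i]) (by linarith)
      have ht0nn : 0 ≤ t0 := Finset.le_inf' hJne s hsnn
      set x' : Fin n → ℝ := x - t0 • c with hx'def
      have hfx' : ∀ i, f i x' = f i x - t0 * f i c := by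
        intro i
        simp [x', map_sub, map_smul, smul_eq_mul]
      have hx'P : x' ∈ P := by
        rw [hP]
        intro i
        rw [hfx' i]
        by_cases hi : f i c < 0
        · have hiJ : i ∈ J := Finset.mem_filter.2 ⟨Finset.mem_univ _, hi⟩
          have h1 : t0 ≤ s i := Finset.inf'_le s hiJ
          have h2 : t0 * (-f i c) ≤ s i * (-f i c) :=
            mul_le_mul_of_nonneg_right h1 (by linarith)
          have h3 : s i * (-f i c) = b i - f i x :=
            div_mul_cancel₀ _ (by linarith)
          nlinarith
        · push_neg at hi
          nlinarith [hxP i, mul_nonneg ht0nn hi]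
      -- the tight set strictly grows
      obtain ⟨j, hjJ, hjinf⟩ := Finset.exists_mem_eq_inf' hJne s
      have hjneg : f j c < 0 := (Finset.mem_filter.1 hjJ).2
      have hjx' : f j x' = b j := by
        rw [hfx' j, ht0def, hjinf]
        have h3 : s j * (-f j c) = b j - f j x := div_mul_cancel₀ _ (by linarith)
        linarith
      have hjx : f j x ≠ b j := by
        intro hjx
        have : j ∈ I := Finset.mem_filter.2 ⟨Finset.mem_univ _, hjx⟩
        have := hIzero j this
        linarith
      set N' : Finset (Fin k) := Finset.univ.filter (fun i => f i x' ≠ b i) with hN'def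
      have hsub : N' ⊆ Finset.univ.filter (fun i => f i x ≠ b i) := by
        intro i hi
        rw [Finset.mem_filter] at hi ⊢
        refine ⟨Finset.mem_univ _, fun heq => ?_⟩
        have hiI : i ∈ I := Finset.mem_filter.2 ⟨Finset.mem_univ _, heq⟩
        exact hi.2 (by rw [hfx' i, hIzero i hiI, mul_zero, sub_zero]; exact heq)
      have hjN : j ∈ Finset.univ.filter (fun i => f i x ≠ b i) :=
        Finset.mem_filter.2 ⟨Finset.mem_univ _, hjx⟩
      have hjN' : j ∉ N' := by
        rw [hN'def, Finset.mem_filter]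
        push_neg
        intro _
        exact hjx'
      have hlt : N'.card < m := by
        rw [← hcard]
        exact Finset.card_lt_card ((Finset.ssubset_iff_of_subset hsub).2 ⟨j, hjN, hjN'⟩)
      obtain ⟨y, c', hyU, hc', hx'eq⟩ := ih N'.card hlt x' hx'P rfl
      refine ⟨y, c' + t0 • c, hyU, ?_, ?_⟩
      · intro i
        have h1 : f i (c' + t0 • c) = f i c' + t0 * f i c := by
          simp [map_add, map_smul, smul_eq_mul]
        rw [h1]
        linarith [hc' i, mul_nonneg ht0nn (neg_nonneg.2 (hfcle i))]
      · have hxx : x = x' + t0 • c := by rw [hx'def]; abel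
        rw [hxx, hx'eq]
        abel
  ext x
  constructor
  · intro hx
    obtain ⟨y, c, hyU, hc, hxe⟩ := key _ x hx rfl
    exact Set.mem_add.2 ⟨y, hyU, c, hCsub c hc, hxe.symm⟩
  · intro hx
    rw [Set.mem_add] at hx
    obtain ⟨y, hy, c, hcC, rfl⟩ := hx
    obtain ⟨F, ⟨hFexp, _⟩, hyF⟩ := hy
    have hyP : y ∈ P := hFexp.subset hyF
    rw [hC] at hcC
    have := hcC y hyP 1 zero_le_one
    simpa using this
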